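/- The generating function identity Σ_{p≥0} Z(p+1)·x^p = 1/2 + ((1-12x)^{3/2} - 1)/(24√3·x) holds for x ∈ (0, 1/12]. -/

import Mathlib

/-- `Z(1) = (2-√3)/4` and `Z(p) = 6^p·(2p-5)!!/(8√3·p!)` for `p ≥ 2`. -/
noncomputable def Zfun : ℕ → ℝ := fun p =>
  if p = 1 then (2 - Real.sqrt 3) / 4
  else 6 ^ p * Nat.doubleFactorial (2 * p - 5) / (8 * Real.sqrt 3 * Nat.factorial p)

open Finset Filter

/-- real coefficient product ∏_{k<n} (k - 3/2) -/
noncomputable def qR : ℕ → ℝ := fun n => ∏ k ∈ Finset.range n, ((k : ℝ) - 3/2)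

/-- Taylor coefficients of (1-u)^{3/2} at 0. -/
noncomputable def cc : ℕ → ℝ := fun n => qR n / (Nat.factorial n)

lemma hasDerivAt_cpow_one_sub (b : ℂ) {z : ℂ} (hz : z.re < 1) :
    HasDerivAt (fun w : ℂ => (1 - w) ^ b) (b * (1 - z) ^ (b - 1) * (-1)) z := by
  have h1 : HasDerivAt (fun w : ℂ => 1 - w) (-1) z := by
    simpa using (hasDerivAt_id z).const_sub 1
  exact h1.cpow_const (Or.inl (by simp [Complex.sub_re]; linarith))

lemma iteratedDeriv_cpow_one_sub (n : ℕ) :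
    ∀ z : ℂ, z.re < 1 → iteratedDeriv n (fun w : ℂ => (1 - w) ^ ((3:ℂ)/2)) z =
      (∏ k ∈ Finset.range n, ((k : ℂ) - 3/2)) * (1 - z) ^ ((3:ℂ)/2 - n) := by
  induction n with
  | zero => intro z hz; simp
  | succ n ih =>
    intro z hz
    rw [iteratedDeriv_succ]
    have hopen : IsOpen {w : ℂ | w.re < 1} := isOpen_lt Complex.continuous_re continuous_const
    have hev : iteratedDeriv n (fun w : ℂ => (1 - w) ^ ((3:ℂ)/2)) =ᶠ[nhds z]
        fun w => (∏ k ∈ Finset.range n, ((k : ℂ) - 3/2)) * (1 - w) ^ ((3:ℂ)/2 - n) := by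
      filter_upwards [hopen.mem_nhds hz] with w hw using ih w hw
    rw [hev.deriv_eq]
    have hd := ((hasDerivAt_cpow_one_sub ((3:ℂ)/2 - n) hz).const_mul
      (∏ k ∈ Finset.range n, ((k : ℂ) - 3/2)))
    rw [hd.deriv]
    rw [Finset.prod_range_succ]
    push_cast
    rw [show (3:ℂ)/2 - (n:ℂ) - 1 = 3/2 - ((n:ℂ) + 1) by ring]
    ring

lemma hasSum_cc_lt_one {u : ℝ} (hu : |u| < 1) :
    HasSum (fun n : ℕ => cc n * u ^ n) ((1 - u) ^ ((3:ℝ)/2)) := by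
  have hdiff : DifferentiableOn ℂ (fun w : ℂ => (1 - w) ^ ((3:ℂ)/2)) (Metric.ball 0 1) := by
    intro z hz
    have hzre : z.re < 1 := by
      have h1 : ‖z‖ < 1 := by simpa [Metric.mem_ball] using hz
      have := Complex.re_le_norm z
      linarith
    exact ((hasDerivAt_cpow_one_sub ((3:ℂ)/2) hzre).differentiableAt).differentiableWithinAt
  have hzmem : (u : ℂ) ∈ Metric.ball (0:ℂ) 1 := by
    simp [Metric.mem_ball, Complex.norm_real, hu]
  have H := Complex.hasSum_taylorSeries_on_ball hdiff hzmem
  have h0re : (0:ℂ).re < 1 := by norm_num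
  have hcast : ∀ n : ℕ, (Nat.factorial n : ℂ)⁻¹ • ((u:ℂ) - 0) ^ n •
      iteratedDeriv n (fun w : ℂ => (1 - w) ^ ((3:ℂ)/2)) 0 = ((cc n * u ^ n : ℝ) : ℂ) := by
    intro n
    rw [iteratedDeriv_cpow_one_sub n 0 h0re]
    have : (∏ k ∈ Finset.range n, ((k : ℂ) - 3/2)) = ((qR n : ℝ) : ℂ) := by
      rw [qR]; push_cast; ring
    rw [this]
    simp only [sub_zero, smul_eq_mul, Complex.one_cpow, mul_one, cc]
    push_cast
    ring
  rw [funext hcast] at H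
  have hfu : ((1:ℂ) - (u:ℂ)) ^ ((3:ℂ)/2) = (((1 - u) ^ ((3:ℝ)/2) : ℝ) : ℂ) := by
    rw [show ((1:ℂ) - (u:ℂ)) = (((1 - u : ℝ)) : ℂ) by push_cast; ring,
      Complex.ofReal_cpow (by rw [abs_lt] at hu; linarith) ((3:ℝ)/2)]
    norm_num
  rw [hfu] at H
  exact Complex.hasSum_ofReal.mp H

lemma dfac_step (m : ℕ) :
    Nat.doubleFactorial (2*(m+1)-1) = (2*m+1) * Nat.doubleFactorial (2*m-1) := by
  cases m with
  | zero => rfl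
  | succ k =>
    have h1 : 2*(k+1+1)-1 = (2*k+1) + 2 := by omega
    have h2 : 2*(k+1)-1 = 2*k+1 := by omega
    rw [h1, h2, Nat.doubleFactorial_add_two]
    congr 1

lemma qR_eq (m : ℕ) : qR (m + 2) = 3 * (Nat.doubleFactorial (2*m-1) : ℝ) / 2 ^ (m+2) := by
  induction m with
  | zero =>
    rw [qR]
    norm_num [Finset.prod_range_succ]
  | succ k ih =>
    have : qR (k + 1 + 2) = qR (k + 2) * ((k+2 : ℝ) - 3/2) := by
      rw [qR, qR, show k+1+2 = (k+2)+1 by ring, Finset.prod_range_succ]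
      push_cast; ring
    rw [this, ih, dfac_step k]
    push_cast
    ring

lemma cc_eq (m : ℕ) :
    cc (m + 2) = 3 * (Nat.doubleFactorial (2*m-1) : ℝ) / (2 ^ (m+2) * Nat.factorial (m+2)) := by
  rw [cc, qR_eq]
  field_simp

lemma cc_zero : cc 0 = 1 := by simp [cc, qR]

lemma cc_one : cc 1 = -(3/2) := by
  rw [cc, qR]
  norm_num

lemma sum_cc (M : ℕ) : ∑ n ∈ Finset.range (M + 2), cc n =
    -((Nat.doubleFactorial (2*M-1) : ℝ) / (2 ^ (M+1) * Nat.factorial (M+1))) := by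
  induction M with
  | zero =>
    rw [Finset.sum_range_succ, Finset.sum_range_one, cc_zero, cc_one]
    norm_num
  | succ k ih =>
    rw [show k+1+2 = (k+2)+1 by ring, Finset.sum_range_succ, ih, cc_eq, dfac_step k]
    have hf : (Nat.factorial (k+2) : ℝ) = (k+2) * Nat.factorial (k+1) := by
      rw [Nat.factorial_succ]; push_cast; ring
    rw [hf]
    have h1 : (Nat.factorial (k+1) : ℝ) ≠ 0 := Nat.cast_ne_zero.mpr (Nat.factorial_ne_zero _)
    have h2 : ((2:ℝ)) ^ (k+1) ≠ 0 := by positivity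
    field_simp
    push_cast
    ring

lemma aM_bound (M : ℕ) :
    (Nat.doubleFactorial (2*M-1) : ℝ) / (2 ^ (M+1) * Nat.factorial (M+1)) ≤ 1 / (2*(M+1)) := by
  induction M with
  | zero => norm_num
  | succ k ih =>
    have hf : (Nat.factorial (k+2) : ℝ) = (k+2) * Nat.factorial (k+1) := by
      rw [Nat.factorial_succ]; push_cast; ring
    have hd : (Nat.doubleFactorial (2*(k+1)-1) : ℝ)
        = (2*k+1) * (Nat.doubleFactorial (2*k-1) : ℝ) := by
      rw [dfac_step k]; push_cast; ring
    have key : (Nat.doubleFactorial (2*(k+1)-1) : ℝ) / (2 ^ (k+2) * Nat.factorial (k+2))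
        = ((Nat.doubleFactorial (2*k-1) : ℝ) / (2 ^ (k+1) * Nat.factorial (k+1)))
          * ((2*k+1) / (2*(k+2))) := by
      rw [hd, show k+1+1 = k+2 by ring, hf]
      have h1 : (Nat.factorial (k+1) : ℝ) ≠ 0 := Nat.cast_ne_zero.mpr (Nat.factorial_ne_zero _)
      have h2 : ((2:ℝ)) ^ (k+1) ≠ 0 := by positivity
      field_simp
      ring
    rw [show k+1+1 = k+2 by ring] at *
    rw [key]
    have hpos : (0:ℝ) ≤ (2*(k:ℝ)+1) / (2*(k+2)) := by positivity
    calc (Nat.doubleFactorial (2*k-1) : ℝ) / (2 ^ (k+1) * Nat.factorial (k+1))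
          * ((2*k+1) / (2*(k+2)))
        ≤ (1/(2*(k+1))) * ((2*k+1) / (2*(k+2))) := by
          apply mul_le_mul_of_nonneg_right _ hpos
          exact_mod_cast ih
      _ ≤ 1 / (2*((k:ℝ)+1+1)) := by
          rw [div_mul_div_comm, one_mul]
          rw [div_le_div_iff₀ (by positivity) (by positivity)]
          push_cast
          nlinarith [sq_nonneg (k:ℝ)]
      _ = 1 / (2*(((k+1 : ℕ):ℝ)+1)) := by push_cast; ring

lemma hasSum_cc_zero : HasSum cc 0 := by
  have hnn : ∀ n, 0 ≤ cc (n + 2) := by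
    intro n
    rw [cc_eq]
    positivity
  have hsummable : Summable cc := by
    rw [← summable_nat_add_iff 2]
    apply summable_of_sum_range_le (c := 1/2) hnn
    intro n
    have : ∑ i ∈ Finset.range n, cc (i + 2)
        = (∑ i ∈ Finset.range (n+2), cc i) - cc 0 - cc 1 := by
      rw [show n+2 = 2+n by ring, Finset.sum_range_add]
      simp [Finset.sum_range_succ, add_comm]
      ring
    rw [this, sum_cc, cc_zero, cc_one]
    have : (0:ℝ) ≤ (Nat.doubleFactorial (2*n-1) : ℝ) / (2 ^ (n+1) * Nat.factorial (n+1)) := by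
      positivity
    linarith [this]
  have htend : Tendsto (fun N => ∑ n ∈ Finset.range N, cc n) atTop (nhds 0) := by
    rw [show (fun N => ∑ n ∈ Finset.range N, cc n)
        = (fun N => ∑ n ∈ Finset.range N, cc n) by rfl]
    have h2 : Tendsto (fun M : ℕ => ∑ n ∈ Finset.range (M + 2), cc n) atTop (nhds 0) := by
      apply squeeze_zero_norm _ tendsto_one_div_add_atTop_nhds_zero_nat
      intro M
      rw [sum_cc, norm_neg, Real.norm_eq_abs, abs_of_nonneg (by positivity)]
      calc (Nat.doubleFactorial (2*M-1) : ℝ) / (2 ^ (M+1) * Nat.factorial (M+1))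
          ≤ 1 / (2*(M+1)) := aM_bound M
        _ ≤ 1 / ((M:ℝ)+1) := by
            apply one_div_le_one_div_of_le (by positivity)
            have := Nat.cast_nonneg (α := ℝ) M
            linarith
    exact (Filter.tendsto_add_atTop_iff_nat 2).mp h2
  have := hsummable.hasSum
  have heq : ∑' n, cc n = 0 :=
    tendsto_nhds_unique (this.tendsto_sum_nat) htend
  rwa [heq] at this

lemma hasSum_cc (u : ℝ) (h0 : 0 < u) (h1 : u ≤ 1) :
    HasSum (fun n : ℕ => cc n * u ^ n) ((1 - u) ^ ((3:ℝ)/2)) := by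
  rcases eq_or_lt_of_le h1 with heq | hlt
  · subst heq
    simp only [one_pow, mul_one, sub_self]
    rw [Real.zero_rpow (by norm_num)]
    exact hasSum_cc_zero
  · exact hasSum_cc_lt_one (by rw [abs_lt]; constructor <;> linarith)

/-- Generating function: `Σ_{p≥0} Z(p+1) x^p = 1/2 + ((1-12x)^{3/2}-1)/(24√3 x)` for
`x ∈ (0, 1/12]`. -/
theorem Z_generating_function (x : ℝ) (hx : x ∈ Set.Ioc (0 : ℝ) (1 / 12)) :
    Summable (fun p : ℕ => Zfun (p + 1) * x ^ p) ∧
    ∑' p : ℕ, Zfun (p + 1) * x ^ p =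
      1 / 2 + ((1 - 12 * x) ^ ((3 : ℝ) / 2) - 1) / (24 * Real.sqrt 3 * x) := by
  obtain ⟨hx0, hx12⟩ := hx
  have hs3 : (0:ℝ) < Real.sqrt 3 := Real.sqrt_pos.mpr (by norm_num)
  have h3 : Real.sqrt 3 * Real.sqrt 3 = 3 := Real.mul_self_sqrt (by norm_num)
  have hu0 : (0:ℝ) < 12 * x := by linarith
  have hu1 : 12 * x ≤ 1 := by linarith
  have H := hasSum_cc (12 * x) hu0 hu1
  have H1 : HasSum (fun n : ℕ => cc (n+1) * (12*x) ^ (n+1))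
      ((1 - 12*x) ^ ((3:ℝ)/2) - 1) := by
    have := (hasSum_nat_add_iff' (f := fun n : ℕ => cc n * (12*x) ^ n) 1).mpr H
    simpa [cc_zero] using this
  have H2 := H1.mul_left (1 / (24 * Real.sqrt 3 * x))
  have H3 := (hasSum_ite_eq (0:ℕ) ((1:ℝ)/2)).add H2
  have hx0' : x ≠ 0 := ne_of_gt hx0
  have hs3' : Real.sqrt 3 ≠ 0 := ne_of_gt hs3
  have hfun : (fun p : ℕ => Zfun (p + 1) * x ^ p)
      = fun p : ℕ => (if p = 0 then (1/2:ℝ) else 0)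
        + 1 / (24 * Real.sqrt 3 * x) * (cc (p+1) * (12*x) ^ (p+1)) := by
    funext p
    cases p with
    | zero =>
      simp only [Zfun, if_pos rfl, ↓reduceIte, pow_zero, pow_one, mul_one]
      rw [show (0:ℕ)+1 = 1 from rfl, cc_one]
      field_simp
      linear_combination (-48) * h3
    | succ m =>
      have hne : m + 1 + 1 ≠ 1 := by omega
      have harg : 2 * (m + 1 + 1) - 5 = 2 * m - 1 := by omega
      simp only [Zfun, if_neg hne, if_neg (Nat.succ_ne_zero m), harg, zero_add]
      rw [show m + 1 + 1 = m + 2 by ring, cc_eq]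
      have h12 : ((12:ℝ)*x) ^ (m+2) = 6^(m+2) * 2^(m+2) * x^(m+2) := by
        rw [show (12:ℝ) = 6*2 by norm_num, mul_pow, mul_pow]
      rw [h12]
      have hfac : (Nat.factorial (m+2) : ℝ) ≠ 0 := Nat.cast_ne_zero.mpr (Nat.factorial_ne_zero _)
      have h2p : ((2:ℝ)) ^ (m+2) ≠ 0 := by positivity
      field_simp
      ring
  rw [hfun]
  refine ⟨H3.summable, ?_⟩
  rw [H3.tsum_eq]
  field_simp
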